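/- For every real y, g_{63}(y) = (1/3) sinh y - (2/3) sinh(y/2) cos(\sqrt{3} y / 2). -/

import Mathlib

noncomputable def g6 (k : ℕ) (y : ℝ) : ℝ :=
  ∑' p : ℕ, y ^ (k + 6 * p) / ((k + 6 * p).factorial : ℝ)

theorem g63_eq (y : ℝ) :
    g6 3 y = (1 / 3) * Real.sinh y
      - (2 / 3) * Real.sinh (y / 2) * Real.cos (Real.sqrt 3 * y / 2) := by
  have hs : ((Real.sqrt 3 : ℝ) : ℂ) ^ 2 = 3 := by
    norm_cast
    rw [Real.sq_sqrt] <;> norm_num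
  set w : ℂ := ((1/2 : ℝ) : ℂ) + ((Real.sqrt 3 / 2 : ℝ) : ℂ) * Complex.I with hw
  have hre : w.re = 1/2 := by simp [hw]
  have hrene : ∀ c : ℂ, c.re ≠ 1/2 → w ≠ c := fun c hc h => hc (by rw [← h, hre])
  have hw3 : w ^ 3 = -1 := by
    rw [hw]
    push_cast
    linear_combination ((3*Complex.I^2 + (Real.sqrt 3:ℂ)*Complex.I^3)/8) * hs
      + ((9 + 3*(Real.sqrt 3:ℂ)*Complex.I)/8) * Complex.I_sq
  have hw6 : w ^ 6 = 1 := by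
    calc w ^ 6 = (w ^ 3) ^ 2 := by ring
    _ = 1 := by rw [hw3]; norm_num
  have hne1 : w + 1 ≠ 0 := by
    intro h
    exact hrene (-1) (by rw [Complex.neg_re, Complex.one_re]; norm_num)
      (by linear_combination h)
  have hw2 : w ^ 2 = w - 1 := by
    have hprod : (w + 1) * (w ^ 2 - w + 1) = 0 := by linear_combination hw3
    rcases mul_eq_zero.mp hprod with h | h
    · exact absurd h hne1
    · linear_combination h
  have hw4 : w ^ 4 = -w := by linear_combination w * hw3
  have hw5 : w ^ 5 = 1 - w := by linear_combination w ^ 2 * hw3 - hw2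
  -- coefficient lemma
  have hgeom : ∀ n : ℕ, ∑ j ∈ Finset.range 6, (-(w ^ n)) ^ j
      = if n % 6 = 3 then (6 : ℂ) else 0 := by
    intro n
    have hmod : w ^ n = w ^ (n % 6) := by
      conv_lhs => rw [← Nat.div_add_mod n 6]
      rw [pow_add, pow_mul, hw6, one_pow, one_mul]
    by_cases h : n % 6 = 3
    · rw [if_pos h, hmod, h, hw3, neg_neg]
      simp
    · rw [if_neg h]
      have hx6 : (-(w ^ n) : ℂ) ^ 6 = 1 := by
        rw [neg_pow]
        norm_num
        rw [← pow_mul, mul_comm, pow_mul, hw6, one_pow]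
      have hne : (-(w ^ n) : ℂ) ≠ 1 := by
        rw [hmod]
        intro hx
        have hwr : w ^ (n % 6) = -1 := by linear_combination -hx
        obtain ⟨r, hr6, hreq⟩ : ∃ r, r < 6 ∧ n % 6 = r :=
          ⟨n % 6, Nat.mod_lt _ (by norm_num), rfl⟩
        rw [hreq] at hwr h
        interval_cases r
        · norm_num at hwr
        · rw [pow_one] at hwr
          exact hrene (-1) (by rw [Complex.neg_re, Complex.one_re]; norm_num) hwr
        · rw [hw2] at hwr
          exact hrene 0 (by rw [Complex.zero_re]; norm_num)
            (by linear_combination hwr)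
        · exact h rfl
        · rw [hw4] at hwr
          exact hrene 1 (by rw [Complex.one_re]; norm_num)
            (by linear_combination -hwr)
        · rw [hw5] at hwr
          exact hrene 2 (by norm_num) (by linear_combination -hwr)
      rw [geom_sum_eq hne, hx6]
      simp
  have hexp : ∀ z : ℂ, Complex.exp z = ∑' n : ℕ, z ^ n / n.factorial := by
    intro z
    rw [Complex.exp_eq_exp_ℂ, NormedSpace.exp_eq_tsum_div]
  have hsumm : ∀ z : ℂ, Summable fun n : ℕ => z ^ n / (n.factorial : ℂ) :=
    fun z => NormedSpace.expSeries_div_summable z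
  have hstep1 : ((g6 3 y : ℝ) : ℂ)
      = ∑' n : ℕ, (if n % 6 = 3 then ((y:ℂ) ^ n / n.factorial) else 0) := by
    rw [g6, Complex.ofReal_tsum]
    push_cast
    have hinj : Function.Injective (fun p : ℕ => 3 + 6 * p) := by
      intro a b h
      simp only [] at h
      omega
    have hsupp : Function.support
        (fun n : ℕ => if n % 6 = 3 then ((y:ℂ) ^ n / n.factorial) else 0)
        ⊆ Set.range (fun p : ℕ => 3 + 6 * p) := by
      intro n hn
      by_cases h : n % 6 = 3
      · exact ⟨n / 6, by show 3 + 6 * (n / 6) = n; omega⟩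
      · simp [Function.mem_support, if_neg h] at hn
    rw [← Function.Injective.tsum_eq hinj hsupp]
    refine tsum_congr fun p => ?_
    rw [if_pos (by omega : (3 + 6 * p) % 6 = 3)]
  have hstep2 : ∑ j ∈ Finset.range 6, ((-1:ℂ)^j / 6) * Complex.exp (w ^ j * ↑y)
      = ∑' n : ℕ, (if n % 6 = 3 then ((y:ℂ)^n / n.factorial) else 0) := by
    calc ∑ j ∈ Finset.range 6, ((-1:ℂ)^j / 6) * Complex.exp (w ^ j * ↑y)
        = ∑ j ∈ Finset.range 6,
            ∑' n : ℕ, ((-1:ℂ)^j / 6) * ((w ^ j * ↑y) ^ n / n.factorial) := by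
          refine Finset.sum_congr rfl fun j _ => ?_
          rw [hexp (w ^ j * ↑y), tsum_mul_left]
      _ = ∑' n : ℕ, ∑ j ∈ Finset.range 6,
            ((-1:ℂ)^j / 6) * ((w ^ j * ↑y) ^ n / n.factorial) := by
          rw [Summable.tsum_finsetSum]
          exact fun j _ => (hsumm _).mul_left _
      _ = _ := by
          refine tsum_congr fun n => ?_
          have hpow : ∀ j : ℕ, ((-1:ℂ)^j / 6) * ((w ^ j * ↑y) ^ n / n.factorial)
              = (-(w ^ n)) ^ j * ((↑y : ℂ) ^ n / n.factorial / 6) := by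
            intro j
            have h1 : (w ^ j) ^ n = (w ^ n) ^ j := by rw [← pow_mul, mul_comm, pow_mul]
            rw [mul_pow, h1, neg_pow]
            ring
          rw [Finset.sum_congr rfl (fun j _ => hpow j), ← Finset.sum_mul, hgeom]
          by_cases h : n % 6 = 3
          · rw [if_pos h, if_pos h]; ring
          · rw [if_neg h, if_neg h]; ring
  have hC : ((g6 3 y : ℝ) : ℂ)
      = ∑ j ∈ Finset.range 6, ((-1:ℂ)^j / 6) * Complex.exp (w ^ j * ↑y) :=
    hstep1.trans hstep2.symm
  have key : ∀ a b : ℝ, (Complex.exp (↑a + ↑b * Complex.I)).re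
      = Real.exp a * Real.cos b := by
    intro a b
    rw [Complex.exp_re]
    congr 2 <;> simp
  have hz1 : w * ↑y = ↑(y/2) + ↑(Real.sqrt 3 * y / 2) * Complex.I := by
    rw [hw]; push_cast; ring
  have hz2 : w ^ 2 * ↑y = ↑(-(y/2)) + ↑(Real.sqrt 3 * y / 2) * Complex.I := by
    rw [hw2, hw]; push_cast; ring
  have hz4 : w ^ 4 * ↑y = ↑(-(y/2)) + ↑(-(Real.sqrt 3 * y / 2)) * Complex.I := by
    rw [hw4, hw]; push_cast; ring
  have hz5 : w ^ 5 * ↑y = ↑(y/2) + ↑(-(Real.sqrt 3 * y / 2)) * Complex.I := by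
    rw [hw5, hw]; push_cast; ring
  have hC2 : ((g6 3 y * 6 : ℝ) : ℂ)
      = Complex.exp ↑y
        - Complex.exp (↑(y/2) + ↑(Real.sqrt 3 * y / 2) * Complex.I)
        + Complex.exp (↑(-(y/2)) + ↑(Real.sqrt 3 * y / 2) * Complex.I)
        - Complex.exp ↑(-y)
        + Complex.exp (↑(-(y/2)) + ↑(-(Real.sqrt 3 * y / 2)) * Complex.I)
        - Complex.exp (↑(y/2) + ↑(-(Real.sqrt 3 * y / 2)) * Complex.I) := by
    rw [show ((g6 3 y * 6 : ℝ) : ℂ) = ((g6 3 y : ℝ) : ℂ) * 6 by push_cast; ring, hC]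
    simp only [Finset.sum_range_succ, Finset.sum_range_zero]
    rw [pow_zero w, one_mul, pow_one w, hw3, neg_one_mul, ← Complex.ofReal_neg,
      hz1, hz2, hz4, hz5]
    ring
  have hRe := congrArg Complex.re hC2
  simp only [Complex.ofReal_re, Complex.sub_re, Complex.add_re, key,
    Complex.exp_ofReal_re, Real.cos_neg] at hRe
  rw [Real.sinh_eq, Real.sinh_eq]
  linear_combination hRe / 6
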